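/- For real x and y with y > 0 and −y ≤ x ≤ y, x R_C(y² − x², y²) = arcsin(x/y). -/

import Mathlib

open MeasureTheory Real

noncomputable def RC (x y : ℝ) : ℝ :=
  (1/2) * ∫ t in Set.Ioi (0:ℝ), (Real.sqrt (t + x))⁻¹ * (t + y)⁻¹

noncomputable def RF (x y z : ℝ) : ℝ :=
  (1/2) * ∫ t in Set.Ioi (0:ℝ), (Real.sqrt ((t + x) * (t + y) * (t + z)))⁻¹

noncomputable def RD (x y z : ℝ) : ℝ :=
  (3/2) * ∫ t in Set.Ioi (0:ℝ),
    (Real.sqrt ((t + x) * (t + y)))⁻¹ * ((t + z) * Real.sqrt (t + z))⁻¹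

noncomputable def RJ (x y z p : ℝ) : ℝ :=
  (3/2) * ∫ t in Set.Ioi (0:ℝ),
    (Real.sqrt ((t + x) * (t + y) * (t + z)))⁻¹ * (t + p)⁻¹

noncomputable def RG (x y z : ℝ) : ℝ :=
  (1/4) * ∫ t in Set.Ioi (0:ℝ),
    (Real.sqrt ((t + x) * (t + y) * (t + z)))⁻¹ *
      (x / (t + x) + y / (t + y) + z / (t + z)) * t

private lemma sqrt_add_tendsto_atTop (a : ℝ) :
    Filter.Tendsto (fun t : ℝ => Real.sqrt (t + a)) Filter.atTop Filter.atTop := by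
  rw [Filter.tendsto_atTop_atTop]
  intro b
  refine ⟨b ^ 2 + |a| + 1, fun t ht => ?_⟩
  have h1 : b ^ 2 ≤ t + a := by
    have := abs_le.1 (le_refl |a|)
    nlinarith [neg_abs_le a, le_abs_self a]
  calc b ≤ Real.sqrt (b ^ 2) := by
        rw [Real.sqrt_sq_eq_abs]; exact le_abs_self b
    _ ≤ Real.sqrt (t + a) := Real.sqrt_le_sqrt h1

private lemma RC_integral (a c : ℝ) (ha : 0 ≤ a) (hc : 0 < c) :
    ∫ t in Set.Ioi (0:ℝ), (Real.sqrt (t + a))⁻¹ * (t + (a + c ^ 2))⁻¹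
      = (2 / c) * (π / 2 - Real.arctan (Real.sqrt a / c)) := by
  have key : ∫ t in Set.Ioi (0:ℝ), (Real.sqrt (t + a))⁻¹ * (t + (a + c ^ 2))⁻¹
      = (2 / c) * (π / 2) - (2 / c) * Real.arctan (Real.sqrt (0 + a) / c) := by
    apply integral_Ioi_of_hasDerivAt_of_nonneg
      (g := fun t => (2 / c) * Real.arctan (Real.sqrt (t + a) / c))
    · exact (continuous_const.mul (Real.continuous_arctan.comp ((Real.continuous_sqrt.comp (continuous_id.add continuous_const)).div_const c))).continuousWithinAt
    · intro t ht
      have hta : 0 < t + a := by have : (0:ℝ) < t := ht; linarith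
      have hsq : 0 < Real.sqrt (t + a) := Real.sqrt_pos.2 hta
      have h1 : HasDerivAt (fun s : ℝ => s + a) 1 t := (hasDerivAt_id t).add_const a
      have h2 : HasDerivAt (fun s : ℝ => Real.sqrt (s + a))
          (1 / (2 * Real.sqrt (t + a))) t := h1.sqrt hta.ne'
      have h3 : HasDerivAt (fun s : ℝ => Real.sqrt (s + a) / c)
          (1 / (2 * Real.sqrt (t + a)) / c) t := h2.div_const c
      have h4 := h3.arctan
      have h5 := h4.const_mul (2 / c)
      refine h5.congr_deriv ?_; symm
      have hsq2 : Real.sqrt (t + a) ^ 2 = t + a := Real.sq_sqrt hta.le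
      have he : 1 + (Real.sqrt (t + a) / c) ^ 2 = (t + (a + c ^ 2)) / c ^ 2 := by
        rw [div_pow, hsq2]; field_simp; ring
      rw [he]
      have hne : t + (a + c ^ 2) ≠ 0 := ne_of_gt (by nlinarith)
      field_simp
    · intro t ht
      have hta : 0 < t + a := by have : (0:ℝ) < t := ht; linarith
      have : (0:ℝ) < t + (a + c ^ 2) := by nlinarith
      positivity
    · have h1 : Filter.Tendsto (fun t : ℝ => Real.sqrt (t + a) / c)
          Filter.atTop Filter.atTop :=
        (sqrt_add_tendsto_atTop a).atTop_div_const hc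
      have h2 : Filter.Tendsto (fun t : ℝ => Real.arctan (Real.sqrt (t + a) / c))
          Filter.atTop (nhds (π / 2)) :=
        (Real.tendsto_arctan_atTop.mono_right nhdsWithin_le_nhds).comp h1
      exact h2.const_mul (2 / c)
  rw [key]; rw [zero_add]; ring

theorem stmt5 (x y : ℝ) (hy : 0 < y) (h1 : -y ≤ x) (h2 : x ≤ y) :
    x * RC (y ^ 2 - x ^ 2) (y ^ 2) = Real.arcsin (x / y) := by
  rcases eq_or_ne x 0 with rfl | hx
  · simp
  · have hc : 0 < |x| := abs_pos.2 hx
    have hxy : x ^ 2 ≤ y ^ 2 := by nlinarith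
    have ha : 0 ≤ y ^ 2 - x ^ 2 := by linarith
    have hsum : y ^ 2 - x ^ 2 + |x| ^ 2 = y ^ 2 := by
      rw [sq_abs]; ring
    have hint := RC_integral (y ^ 2 - x ^ 2) |x| ha hc
    rw [hsum] at hint
    set a := y ^ 2 - x ^ 2 with ha_def
    have hRC : RC a (y ^ 2) = (1 / |x|) * (π / 2 - Real.arctan (Real.sqrt a / |x|)) := by
      rw [RC, hint]; ring
    rw [hRC]
    rcases eq_or_lt_of_le hxy with heq | hlt
    · -- |x| = y
      have ha0 : a = 0 := by rw [ha_def]; linarith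
      rw [ha0, Real.sqrt_zero, zero_div, Real.arctan_zero, sub_zero]
      have hxy' : x = y ∨ x = -y := by
        rcases eq_or_lt_of_le h2 with h | h
        · left; exact h
        · right; nlinarith
      rcases hxy' with rfl | rfl
      · rw [abs_of_pos hy, div_self hy.ne', Real.arcsin_one]
        field_simp
      · rw [abs_neg, abs_of_pos hy]
        rw [show -y / y = -1 by field_simp, Real.arcsin_neg, Real.arcsin_one]
        field_simp
    · -- |x| < y
      have hsa : 0 < a := by rw [ha_def]; linarith
      have hsq : 0 < Real.sqrt a := Real.sqrt_pos.2 hsa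
      have hxlt : x < y := by nlinarith
      have hxgt : -y < x := by nlinarith
      have hmem : x / y ∈ Set.Ioo (-(1:ℝ)) 1 := by
        constructor
        · rw [neg_lt, ← neg_div, div_lt_one hy]; linarith
        · rw [div_lt_one hy]; linarith
      rw [Real.arcsin_eq_arctan hmem]
      have h1 : 1 - (x / y) ^ 2 = a / y ^ 2 := by
        rw [ha_def]; field_simp
      have h2 : Real.sqrt (1 - (x / y) ^ 2) = Real.sqrt a / y := by
        rw [h1, Real.sqrt_div hsa.le, Real.sqrt_sq hy.le]
      have h3 : x / y / (Real.sqrt a / y) = x / Real.sqrt a := by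
        field_simp
      rw [h2, h3]
      rcases hx.lt_or_gt with hneg | hpos
      · rw [abs_of_neg hneg]
        have hkey := Real.arctan_inv_of_pos
          (show 0 < Real.sqrt a / (-x) from div_pos hsq (neg_pos.2 hneg))
        rw [inv_div] at hkey
        have hodd : Real.arctan (x / Real.sqrt a)
            = - Real.arctan (-x / Real.sqrt a) := by
          rw [show -x / Real.sqrt a = -(x / Real.sqrt a) by ring, Real.arctan_neg, neg_neg]
        rw [hodd, hkey]
        field_simp
      · rw [abs_of_pos hpos]
        have hkey := Real.arctan_inv_of_pos
          (show 0 < Real.sqrt a / x from div_pos hsq hpos)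
        rw [inv_div] at hkey
        rw [hkey]
        field_simp
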